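/- Let G=(V,E) be a finite simple graph and let 𝔾 be the 2-blowup of G, i.e. the graph on vertex set V × {0,1} in which (u,a) and (v,b) are adjacent if and only if u = v and a ≠ b, or u and v are adjacent in G. Then for every m, T ∈ ℕ_{>0}: G has a T-winning m-strategy if and only if 𝔾 has a T-winning 2m-strategy. -/

import Mathlib

open scoped Classical
noncomputable section

variable {V : Type*}

/-- The neighbourhood of a set of vertices: all vertices outside `S` adjacent to some
vertex of `S`. -/
def nbhd [Fintype V] (G : SimpleGraph V) (S : Finset V) : Finset V :=
  Finset.univ.filter fun v => v ∉ S ∧ ∃ u ∈ S, G.Adj u v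

/-- The burning sets of a strategy `F` (where `F i` is the firefighter set at time `i`):
`B 0 = V` and `B (t+1) = (B t \ F (t+1)) ∪ N(B t \ F (t+1))`. -/
def burn [Fintype V] (G : SimpleGraph V) (F : ℕ → Finset V) : ℕ → Finset V
  | 0 => Finset.univ
  | t + 1 => (burn G F t \ F (t + 1)) ∪ nbhd G (burn G F t \ F (t + 1))

/-- `F` is a `T`-winning `m`-strategy for `G`. -/
def WinningStrategy [Fintype V] (G : SimpleGraph V) (m T : ℕ) (F : ℕ → Finset V) : Prop :=
  (∀ i, (F i).card ≤ m) ∧ burn G F T = ∅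

/-- The firefighter number of `G`: the least `m` admitting a winning `m`-strategy. -/
def ffn [Fintype V] (G : SimpleGraph V) : ℕ :=
  sInf {m | ∃ T F, WinningStrategy G m T F}


/-- The 2-blowup of `G`: on vertex set `V × {0,1}`, vertices `(u, a)` and `(v, b)` are
adjacent iff `u = v` and `a ≠ b`, or `u` and `v` are adjacent in `G`. -/
def twoBlowup (G : SimpleGraph V) : SimpleGraph (V × Bool) where
  Adj x y := (x.1 = y.1 ∧ x.2 ≠ y.2) ∨ G.Adj x.1 y.1
  symm := by
    constructor
    rintro ⟨u, a⟩ ⟨v, b⟩ (⟨h1, h2⟩ | h)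
    · exact Or.inl ⟨h1.symm, h2.symm⟩
    · exact Or.inr h.symm
  loopless := by
    constructor
    rintro ⟨u, a⟩ (⟨_, h⟩ | h)
    · exact h rfl
    · exact G.irrefl h

attribute [local instance 9999] Classical.propDecidable

lemma mem_nbhd_iff [Fintype V] (G : SimpleGraph V) (S : Finset V) (v : V) :
    v ∈ nbhd G S ↔ v ∉ S ∧ ∃ u ∈ S, G.Adj u v := by
  simp [nbhd]

lemma blowup_burn [Fintype V] (G : SimpleGraph V) (F : ℕ → Finset V) (t : ℕ) (v : V) (b : Bool) :
    (v, b) ∈ burn (twoBlowup G) (fun i => (F i) ×ˢ (Finset.univ : Finset Bool)) t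
      ↔ v ∈ burn G F t := by
  induction t generalizing v b with
  | zero => simp [burn]
  | succ t ih =>
    rw [burn, burn, Finset.mem_union, Finset.mem_union, mem_nbhd_iff, mem_nbhd_iff]
    have hmem : ∀ (w : V) (c : Bool),
        ((w, c) ∈ burn (twoBlowup G) (fun i => (F i) ×ˢ (Finset.univ : Finset Bool)) t \
          F (t + 1) ×ˢ (Finset.univ : Finset Bool))
        ↔ (w ∈ burn G F t \ F (t + 1)) := by
      intro w c
      rw [Finset.mem_sdiff, Finset.mem_sdiff, ih, Finset.mem_product]
      simp
    constructor
    · rintro (h | ⟨hnv, ⟨u, a⟩, hu, hadj⟩)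
      · exact Or.inl ((hmem v b).mp h)
      · rcases hadj with ⟨h1, -⟩ | h
        · have h1' : u = v := h1
          exact absurd ((hmem v b).mpr (h1' ▸ (hmem u a).mp hu)) hnv
        · exact Or.inr ⟨fun hc => hnv ((hmem v b).mpr hc), u, (hmem u a).mp hu, h⟩
    · rintro (h | ⟨hnv, u, hu, hadj⟩)
      · exact Or.inl ((hmem v b).mpr h)
      · exact Or.inr ⟨fun hc => hnv ((hmem v b).mp hc), ⟨u, b⟩, (hmem u b).mpr hu, Or.inr hadj⟩

/-- `G` has a `T`-winning `m`-strategy iff its 2-blowup has a `T`-winning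
`2m`-strategy. -/
theorem winning_twoBlowup_iff [Fintype V] (G : SimpleGraph V) (m T : ℕ)
    (hm : 0 < m) (hT : 0 < T) :
    (∃ F, WinningStrategy G m T F) ↔
      (∃ F, WinningStrategy (twoBlowup G) (2 * m) T F) := by
  constructor
  · rintro ⟨F, hF, hwin⟩
    refine ⟨fun i => (F i) ×ˢ Finset.univ, fun i => ?_, ?_⟩
    · rw [Finset.card_product]
      simp only [Finset.card_univ, Fintype.card_bool]
      have h := hF i
      calc (F i).card * 2 ≤ m * 2 := Nat.mul_le_mul_right 2 h
        _ = 2 * m := Nat.mul_comm _ _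
    · rw [Finset.eq_empty_iff_forall_notMem]
      rintro ⟨v, b⟩ hv
      rw [blowup_burn, hwin] at hv
      exact absurd hv (Finset.notMem_empty _)
  · rintro ⟨F', hF', hwin⟩
    set F : ℕ → Finset V :=
      fun i => Finset.univ.filter (fun v => (v, false) ∈ F' i ∧ (v, true) ∈ F' i) with hFdef
    have hcard : ∀ i, (F i).card ≤ m := by
      intro i
      have hsub : (F i) ×ˢ (Finset.univ : Finset Bool) ⊆ F' i := by
        rintro ⟨v, b⟩ hv
        rw [Finset.mem_product] at hv
        have hv1 := hv.1
        simp only [hFdef, Finset.mem_filter, Finset.mem_univ, true_and] at hv1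
        cases b
        · exact hv1.1
        · exact hv1.2
      have h1 := Finset.card_le_card hsub
      rw [Finset.card_product] at h1
      simp only [Finset.card_univ, Fintype.card_bool] at h1
      have h2 := hF' i
      have h3 : (F i).card * 2 ≤ m * 2 := le_trans h1 (h2.trans_eq (Nat.mul_comm 2 m))
      exact Nat.le_of_mul_le_mul_right h3 (by norm_num)
    have hinv : ∀ t v b, v ∈ burn G F t → (v, b) ∈ burn (twoBlowup G) F' t := by
      intro t
      induction t with
      | zero => intro v b _; simp [burn]
      | succ t ih =>
        intro v b hv
        rw [burn] at hv ⊢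
        rw [Finset.mem_union] at hv ⊢
        have key : ∀ u, u ∈ burn G F t → u ∉ F (t + 1) →
            ∃ a, (u, a) ∈ burn (twoBlowup G) F' t ∧ (u, a) ∉ F' (t + 1) := by
          intro u hu1 hu2
          have hnot : ¬((u, false) ∈ F' (t + 1) ∧ (u, true) ∈ F' (t + 1)) := by
            intro h
            exact hu2 (by simp [hFdef, h.1, h.2])
          rcases not_and_or.mp hnot with h | h
          · exact ⟨false, ih u false hu1, h⟩
          · exact ⟨true, ih u true hu1, h⟩
        rcases hv with hv | hv
        · rw [Finset.mem_sdiff] at hv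
          rcases key v hv.1 hv.2 with ⟨a, ha1, ha2⟩
          by_cases hb : (v, b) ∈ F' (t + 1)
          · refine Or.inr ?_
            rw [mem_nbhd_iff]
            refine ⟨fun hc => (Finset.mem_sdiff.mp hc).2 hb, ⟨v, a⟩, ?_, ?_⟩
            · rw [Finset.mem_sdiff]; exact ⟨ha1, ha2⟩
            · have hab : a ≠ b := by rintro rfl; exact ha2 hb
              exact Or.inl ⟨rfl, hab⟩
          · refine Or.inl ?_
            rw [Finset.mem_sdiff]
            exact ⟨ih v b hv.1, hb⟩
        · rw [mem_nbhd_iff] at hv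
          obtain ⟨hvnot, u, hu, hadj⟩ := hv
          rw [Finset.mem_sdiff] at hu
          rcases key u hu.1 hu.2 with ⟨a, ha1, ha2⟩
          by_cases hb : (v, b) ∈ burn (twoBlowup G) F' t ∧ (v, b) ∉ F' (t + 1)
          · refine Or.inl ?_
            rw [Finset.mem_sdiff]
            exact hb
          · refine Or.inr ?_
            rw [mem_nbhd_iff]
            refine ⟨fun hc => hb (Finset.mem_sdiff.mp hc), ⟨u, a⟩, ?_, Or.inr hadj⟩
            rw [Finset.mem_sdiff]
            exact ⟨ha1, ha2⟩
    refine ⟨F, hcard, ?_⟩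
    rw [Finset.eq_empty_iff_forall_notMem]
    intro v hv
    have := hinv T v false hv
    rw [hwin] at this
    exact absurd this (Finset.notMem_empty _)
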